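/- Let {Xⁿ} be a visual approximation of width w with visual parameter Λ > 1 for a bounded metric space (S,d), and let d' be another metric on S. Then {Xⁿ} is a visual approximation of width w for (S,d') if and only if the identity map id_S : (S,d) → (S,d') is a snowflake equivalence, i.e., there exist α > 0 and C ≥ 1 with (1/C)·d(x,y)^α ≤ d'(x,y) ≤ C·d(x,y)^α for all x,y ∈ S. Moreover, in that case the visual parameter Λ' of {Xⁿ} for (S,d') satisfies Λ' = Λ^α. -/

import Mathlib

open Set

variable {S : Type*}

/-- A chain of tiles in a cover `T`: consecutive tiles intersect. -/
def TileChain (T : Set (Set S)) (A B : Set S) (k : ℕ) : Prop :=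
  ∃ c : ℕ → Set S, c 0 = A ∧ c k = B ∧ (∀ i, i ≤ k → c i ∈ T) ∧
    ∀ i, i < k → (c i ∩ c (i + 1)).Nonempty

/-- The width-`w` neighborhood `U_w(A)` of a tile `A` in a cover `T`. -/
def Uw (T : Set (Set S)) (w : ℕ) (A : Set S) : Set S :=
  ⋃₀ {B | B ∈ T ∧ ∃ k, k ≤ w ∧ TileChain T A B k}

/-- `d` is a metric on `S` (as a distance function). -/
def IsMetricFun (d : S → S → ℝ) : Prop :=
  (∀ x y, 0 ≤ d x y) ∧ (∀ x y, d x y = 0 ↔ x = y) ∧ (∀ x y, d x y = d y x) ∧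
    ∀ x y z, d x z ≤ d x y + d y z

/-- Diameter of a set with respect to a distance function `d`. -/
noncomputable def diamOf (d : S → S → ℝ) (A : Set S) : ℝ :=
  sSup {t | ∃ x ∈ A, ∃ y ∈ A, t = d x y}

/-- `{Xⁿ}` is a visual approximation of width `w` with visual parameter `Λ` for `(S,d)`. -/
def IsVisualWith (d : S → S → ℝ) (X : ℕ → Set (Set S)) (w : ℕ) (Λ : ℝ) : Prop :=
  (∀ n, ⋃₀ X n = Set.univ) ∧ X 0 = {Set.univ} ∧
  ∃ C : ℝ, 1 ≤ C ∧ ∀ n : ℕ, ∀ A ∈ X n,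
    (Λ ^ (-(n : ℤ)) / C ≤ diamOf d A ∧ diamOf d A ≤ C * Λ ^ (-(n : ℤ))) ∧
    ∀ B ∈ X n, Uw (X n) w A ∩ Uw (X n) w B = ∅ →
      ∀ a ∈ A, ∀ b ∈ B, Λ ^ (-(n : ℤ)) / C ≤ d a b

-- helper: d p q ≤ diamOf d A
lemma dist_le_diamOf {d : S → S → ℝ} (hbd : ∃ M : ℝ, ∀ x y, d x y ≤ M)
    {A : Set S} {p q : S} (hp : p ∈ A) (hq : q ∈ A) : d p q ≤ diamOf d A := by
  obtain ⟨M, hM⟩ := hbd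
  apply le_csSup
  · exact ⟨M, by rintro t ⟨x, _, y, _, rfl⟩; exact hM x y⟩
  · exact ⟨p, hp, q, hq, rfl⟩

-- chain bound
lemma chain_bound {d : S → S → ℝ} (hd : IsMetricFun d) (hbd : ∃ M : ℝ, ∀ x y, d x y ≤ M)
    {T : Set (Set S)} {D : ℝ} (hD : ∀ A ∈ T, diamOf d A ≤ D) :
    ∀ k : ℕ, ∀ c : ℕ → Set S, (∀ i, i ≤ k → c i ∈ T) →
      (∀ i, i < k → (c i ∩ c (i + 1)).Nonempty) →
      ∀ p ∈ c 0, ∀ q ∈ c k, d p q ≤ (k + 1) * D := by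
  intro k
  induction k with
  | zero =>
    intro c hmem _ p hp q hq
    simpa using (dist_le_diamOf hbd hp hq).trans (hD _ (hmem 0 le_rfl))
  | succ k ih =>
    intro c hmem hchain p hp q hq
    obtain ⟨t, ht1, ht2⟩ := hchain k (Nat.lt_succ_self k)
    have h1 : d p t ≤ (k + 1) * D :=
      ih c (fun i hi => hmem i (hi.trans (Nat.le_succ k)))
        (fun i hi => hchain i (hi.trans (Nat.lt_succ_self k))) p hp t ht1
    have h2 : d t q ≤ D :=
      (dist_le_diamOf hbd ht2 hq).trans (hD _ (hmem (k + 1) le_rfl))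
    calc d p q ≤ d p t + d t q := hd.2.2.2 p t q
      _ ≤ (k + 1) * D + D := add_le_add h1 h2
      _ = ((k + 1 : ℕ) + 1) * D := by push_cast; ring

-- Uw bound
lemma uw_bound {d : S → S → ℝ} (hd : IsMetricFun d) (hbd : ∃ M : ℝ, ∀ x y, d x y ≤ M)
    {T : Set (Set S)} {D : ℝ} (hD : ∀ A ∈ T, diamOf d A ≤ D) (hD0 : 0 ≤ D)
    {w : ℕ} {A : Set S} {p z : S} (hp : p ∈ A) (hz : z ∈ Uw T w A) :
    d p z ≤ (w + 1) * D := by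
  obtain ⟨B, ⟨hBT, k, hkw, c, hc0, hck, hmem, hchain⟩, hzB⟩ := hz
  have := chain_bound hd hbd hD k c hmem hchain p (hc0 ▸ hp) z (hck ▸ hzB)
  refine this.trans ?_
  have : ((k : ℝ) + 1) ≤ (w : ℝ) + 1 := by exact_mod_cast Nat.succ_le_succ hkw
  exact mul_le_mul_of_nonneg_right this hD0

def Prox (X : ℕ → Set (Set S)) (w : ℕ) (x y : S) (n : ℕ) : Prop :=
  ∃ A ∈ X n, ∃ B ∈ X n, x ∈ A ∧ y ∈ B ∧ (Uw (X n) w A ∩ Uw (X n) w B).Nonempty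

lemma prox_zero {X : ℕ → Set (Set S)} {w : ℕ} (h0 : X 0 = {Set.univ}) (x y : S) :
    Prox X w x y 0 := by
  refine ⟨Set.univ, by simp [h0], Set.univ, by simp [h0], trivial, trivial, x, ?_, ?_⟩ <;>
  · exact ⟨Set.univ, ⟨by simp [h0], 0, Nat.zero_le w,
      fun _ => Set.univ, rfl, rfl, fun i _ => by simp [h0], fun i hi => absurd hi (Nat.not_lt_zero i)⟩, trivial⟩

lemma visual_bounds {d : S → S → ℝ} (hd : IsMetricFun d) (hbd : ∃ M : ℝ, ∀ x y, d x y ≤ M)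
    {X : ℕ → Set (Set S)} {w : ℕ} {Λ : ℝ} (hΛ : 0 < Λ)
    (hvis : IsVisualWith d X w Λ) :
    ∃ C : ℝ, 1 ≤ C ∧ ∀ x y : S, ∀ n : ℕ,
      (Prox X w x y n → d x y ≤ C * Λ ^ (-(n : ℤ))) ∧
      (¬ Prox X w x y n → Λ ^ (-(n : ℤ)) / C ≤ d x y) := by
  obtain ⟨hcov, h0, C₁, hC₁, hmain⟩ := hvis
  refine ⟨2 * (w + 1) * C₁, ?_, ?_⟩
  · nlinarith [hC₁, Nat.cast_nonneg (α := ℝ) w]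
  intro x y n
  have hτ : (0:ℝ) < Λ ^ (-(n : ℤ)) := zpow_pos hΛ _
  constructor
  · rintro ⟨A, hA, B, hB, hxA, hyB, z, hzA, hzB⟩
    have hD : ∀ T ∈ X n, diamOf d T ≤ C₁ * Λ ^ (-(n : ℤ)) :=
      fun T hT => ((hmain n T hT).1).2
    have hD0 : (0:ℝ) ≤ C₁ * Λ ^ (-(n : ℤ)) := by positivity
    have h1 : d x z ≤ (w + 1) * (C₁ * Λ ^ (-(n : ℤ))) := uw_bound hd hbd hD hD0 hxA hzA
    have h2 : d y z ≤ (w + 1) * (C₁ * Λ ^ (-(n : ℤ))) := uw_bound hd hbd hD hD0 hyB hzB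
    have htri := hd.2.2.2 x z y
    have hsym : d z y = d y z := hd.2.2.1 z y
    nlinarith
  · intro hnp
    have hx : x ∈ ⋃₀ X n := by rw [hcov n]; trivial
    have hy : y ∈ ⋃₀ X n := by rw [hcov n]; trivial
    obtain ⟨A, hA, hxA⟩ := hx
    obtain ⟨B, hB, hyB⟩ := hy
    have hdisj : Uw (X n) w A ∩ Uw (X n) w B = ∅ := by
      by_contra h
      exact hnp ⟨A, hA, B, hB, hxA, hyB, Set.nonempty_iff_ne_empty.mpr h⟩
    have := (hmain n A hA).2 B hB hdisj x hxA y hyB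
    refine le_trans ?_ this
    have hC₁' : C₁ ≤ 2 * (w + 1) * C₁ := by nlinarith [Nat.cast_nonneg (α := ℝ) w]
    gcongr

lemma zpow_rpow_comm {Λ : ℝ} (hΛ : 0 < Λ) (α : ℝ) (n : ℤ) :
    (Λ ^ n) ^ α = (Λ ^ α) ^ n := by
  rw [← Real.rpow_intCast Λ n, ← Real.rpow_mul hΛ.le, mul_comm,
    Real.rpow_mul hΛ.le, Real.rpow_intCast]

lemma snowflake_visual {d d' : S → S → ℝ}
    (hbd : ∃ M : ℝ, ∀ x y, d x y ≤ M) (hbd' : ∃ M : ℝ, ∀ x y, d' x y ≤ M)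
    (hd : IsMetricFun d) (hd' : IsMetricFun d')
    {X : ℕ → Set (Set S)} {w : ℕ} {Λ : ℝ} (hΛ : 1 < Λ)
    (hvis : IsVisualWith d X w Λ) (α C : ℝ) (hα : 0 < α) (hC : 1 ≤ C)
    (hcomp : ∀ x y : S, d x y ^ α / C ≤ d' x y ∧ d' x y ≤ C * d x y ^ α) :
    IsVisualWith d' X w (Λ ^ α) := by
  obtain ⟨hcov, h0, C₁, hC₁, hmain⟩ := hvis
  obtain ⟨M, hM⟩ := hbd
  obtain ⟨M', hM'⟩ := hbd'
  have hΛ0 : (0:ℝ) < Λ := lt_trans zero_lt_one hΛ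
  have hC₁0 : (0:ℝ) < C₁ := lt_of_lt_of_le zero_lt_one hC₁
  have hC0 : (0:ℝ) < C := lt_of_lt_of_le zero_lt_one hC
  have h2C : (1:ℝ) ≤ 2 * C₁ := by linarith
  have hpow1 : (1:ℝ) ≤ (2 * C₁) ^ α := Real.one_le_rpow h2C hα.le
  refine ⟨hcov, h0, C * (2 * C₁) ^ α, by nlinarith, ?_⟩
  intro n A hA
  obtain ⟨⟨hlo, hhi⟩, hsep⟩ := hmain n A hA
  set τ : ℝ := Λ ^ (-(n : ℤ)) with hτdef
  have hτ0 : 0 < τ := zpow_pos hΛ0 _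
  have hkey : (Λ ^ α) ^ (-(n : ℤ)) = τ ^ α := (zpow_rpow_comm hΛ0 α _).symm
  have hbddA : BddAbove {t | ∃ x ∈ A, ∃ y ∈ A, t = d' x y} :=
    ⟨M', by rintro t ⟨x, _, y, _, rfl⟩; exact hM' x y⟩
  refine ⟨⟨?_, ?_⟩, ?_⟩
  · -- lower diameter bound
    rw [hkey]
    -- find a pair with d x y ≥ τ / (2 * C₁)
    have hex : ∃ x ∈ A, ∃ y ∈ A, τ / (2 * C₁) ≤ d x y := by
      by_contra hcon
      push_neg at hcon
      have : diamOf d A ≤ τ / (2 * C₁) := by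
        apply Real.sSup_le
        · rintro t ⟨x, hx, y, hy, rfl⟩
          exact (hcon x hx y hy).le
        · positivity
      have hlt : τ / C₁ > τ / (2 * C₁) := by
        apply div_lt_div_of_pos_left hτ0 hC₁0
        linarith
      linarith [hlo, this]
    obtain ⟨x, hx, y, hy, hxy⟩ := hex
    have h1 : τ ^ α / (C * (2 * C₁) ^ α) ≤ d' x y := by
      have h2 : (τ / (2 * C₁)) ^ α ≤ d x y ^ α :=
        Real.rpow_le_rpow (by positivity) hxy hα.le
      have h3 : (τ / (2 * C₁)) ^ α = τ ^ α / (2 * C₁) ^ α :=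
        Real.div_rpow hτ0.le (by linarith) α
      have h4 := (hcomp x y).1
      rw [h3] at h2
      calc τ ^ α / (C * (2 * C₁) ^ α) = (τ ^ α / (2 * C₁) ^ α) / C := by ring
        _ ≤ d x y ^ α / C := by gcongr
        _ ≤ d' x y := h4
    exact h1.trans (le_csSup hbddA ⟨x, hx, y, hy, rfl⟩)
  · -- upper diameter bound
    rw [hkey]
    apply Real.sSup_le
    · rintro t ⟨x, hx, y, hy, rfl⟩
      have h1 : d x y ≤ C₁ * τ := (dist_le_diamOf ⟨M, hM⟩ hx hy).trans hhi
      have h2 : d x y ^ α ≤ (C₁ * τ) ^ α :=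
        Real.rpow_le_rpow (hd.1 x y) h1 hα.le
      have h3 : (C₁ * τ) ^ α = C₁ ^ α * τ ^ α := Real.mul_rpow hC₁0.le hτ0.le
      have h4 : C₁ ^ α ≤ (2 * C₁) ^ α :=
        Real.rpow_le_rpow hC₁0.le (by linarith) hα.le
      calc d' x y ≤ C * d x y ^ α := (hcomp x y).2
        _ ≤ C * (C₁ ^ α * τ ^ α) := by rw [← h3]; gcongr
        _ ≤ C * ((2 * C₁) ^ α * τ ^ α) := by gcongr
        _ = C * (2 * C₁) ^ α * τ ^ α := by ring
    · positivity
  · -- separation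
    intro B hB hdisj a ha b hb
    rw [hkey]
    have h1 : τ / C₁ ≤ d a b := hsep B hB hdisj a ha b hb
    have h2 : (τ / C₁) ^ α ≤ d a b ^ α := Real.rpow_le_rpow (by positivity) h1 hα.le
    have h3 : (τ / C₁) ^ α = τ ^ α / C₁ ^ α := Real.div_rpow hτ0.le hC₁0.le α
    have h4 : C₁ ^ α ≤ (2 * C₁) ^ α := Real.rpow_le_rpow hC₁0.le (by linarith) hα.le
    have h5 : (0:ℝ) < C₁ ^ α := Real.rpow_pos_of_pos hC₁0 α
    calc τ ^ α / (C * (2 * C₁) ^ α) ≤ τ ^ α / (C * C₁ ^ α) :=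
          div_le_div_of_nonneg_left (Real.rpow_nonneg hτ0.le α) (by positivity)
            (by gcongr)
      _ = (τ ^ α / C₁ ^ α) / C := by ring
      _ ≤ d a b ^ α / C := by rw [← h3]; gcongr
      _ ≤ d' a b := (hcomp a b).1

lemma snowflake_of_visual {d d' : S → S → ℝ}
    (hd : IsMetricFun d) (hd' : IsMetricFun d')
    (hbd : ∃ M : ℝ, ∀ x y, d x y ≤ M) (hbd' : ∃ M : ℝ, ∀ x y, d' x y ≤ M)
    {X : ℕ → Set (Set S)} {w : ℕ} {Λ Λ' : ℝ} (hΛ : 1 < Λ) (hΛ' : 1 < Λ')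
    (hvis : IsVisualWith d X w Λ) (hvis' : IsVisualWith d' X w Λ') :
    ∃ α C : ℝ, 0 < α ∧ 1 ≤ C ∧
      ∀ x y : S, d x y ^ α / C ≤ d' x y ∧ d' x y ≤ C * d x y ^ α := by
  classical
  have hΛ0 : (0:ℝ) < Λ := lt_trans zero_lt_one hΛ
  have hΛ'0 : (0:ℝ) < Λ' := lt_trans zero_lt_one hΛ'
  obtain ⟨C, hC, hCb⟩ := visual_bounds hd hbd hΛ0 hvis
  obtain ⟨C', hC', hCb'⟩ := visual_bounds hd' hbd' hΛ'0 hvis'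
  have hC0 : (0:ℝ) < C := lt_of_lt_of_le zero_lt_one hC
  have hC'0 : (0:ℝ) < C' := lt_of_lt_of_le zero_lt_one hC'
  set α : ℝ := Real.log Λ' / Real.log Λ with hαdef
  have hlogΛ : 0 < Real.log Λ := Real.log_pos hΛ
  have hlogΛ' : 0 < Real.log Λ' := Real.log_pos hΛ'
  have hα : 0 < α := div_pos hlogΛ' hlogΛ
  have hΛα : Λ ^ α = Λ' := by
    rw [Real.rpow_def_of_pos hΛ0, hαdef, mul_comm,
      div_mul_cancel₀ _ (ne_of_gt hlogΛ), Real.exp_log hΛ'0]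
  set C₂ : ℝ := C' * (C * Λ) ^ α + C ^ α * C' * Λ' with hC₂def
  have hCΛ1 : (1:ℝ) ≤ C * Λ := by nlinarith
  have hCΛα : (1:ℝ) ≤ (C * Λ) ^ α := Real.one_le_rpow hCΛ1 hα.le
  have hCα0 : (0:ℝ) < C ^ α := Real.rpow_pos_of_pos hC0 α
  have hterm1 : (1:ℝ) ≤ C' * (C * Λ) ^ α := by nlinarith
  have hterm2 : (0:ℝ) < C ^ α * C' * Λ' := by positivity
  have hC₂1 : 1 ≤ C₂ := by rw [hC₂def]; linarith
  have hC₂0 : (0:ℝ) < C₂ := lt_of_lt_of_le zero_lt_one hC₂1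
  refine ⟨α, C₂, hα, hC₂1, ?_⟩
  intro x y
  by_cases hxy : x = y
  · subst hxy
    have h1 : d x x = 0 := (hd.2.1 x x).mpr rfl
    have h2 : d' x x = 0 := (hd'.2.1 x x).mpr rfl
    rw [h1, h2, Real.zero_rpow (ne_of_gt hα)]
    simp
  · -- x ≠ y : find the critical level m
    have hdpos : 0 < d x y := by
      rcases lt_or_eq_of_le (hd.1 x y) with h | h
      · exact h
      · exact absurd ((hd.2.1 x y).mp h.symm) hxy
    have hex : ∃ n : ℕ, ¬ Prox X w x y n := by
      obtain ⟨n, hn⟩ := pow_unbounded_of_one_lt (C / d x y) hΛ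
      refine ⟨n, fun hp => ?_⟩
      have h1 := (hCb x y n).1 hp
      rw [zpow_neg, zpow_natCast] at h1
      have hΛn : (0:ℝ) < Λ ^ n := pow_pos hΛ0 n
      rw [div_lt_iff₀ hdpos] at hn
      have h2 : d x y * Λ ^ n ≤ C := by
        have := mul_le_mul_of_nonneg_right h1 hΛn.le
        rwa [mul_assoc, inv_mul_cancel₀ (ne_of_gt hΛn), mul_one] at this
      nlinarith [mul_comm (d x y) (Λ ^ n)]
    set N := Nat.find hex with hNdef
    have hN0 : N ≠ 0 := by
      intro h
      exact (Nat.find_spec hex) (h ▸ prox_zero hvis.2.1 x y : Prox X w x y N)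
    set m := N - 1 with hmdef
    have hmN : m < N := Nat.pred_lt hN0
    have hm : Prox X w x y m := not_not.mp (by simpa using Nat.find_min hex hmN)
    have hm1 : ¬ Prox X w x y (m + 1) := by
      have hmN1 : m + 1 = N := by omega
      rw [hmN1]
      exact Nat.find_spec hex
    set τ : ℝ := Λ ^ (-(m : ℤ)) with hτdef
    set τ' : ℝ := Λ' ^ (-(m : ℤ)) with hτ'def
    have hτ0 : 0 < τ := zpow_pos hΛ0 _
    have hτ'0 : 0 < τ' := zpow_pos hΛ'0 _
    have hττ' : τ ^ α = τ' := by
      rw [hτdef, zpow_rpow_comm hΛ0, hΛα]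
    -- bounds for d
    have h1 : d x y ≤ C * τ := (hCb x y m).1 hm
    have h2 : τ / (C * Λ) ≤ d x y := by
      have := (hCb x y (m + 1)).2 hm1
      have heq : Λ ^ (-((m + 1 : ℕ) : ℤ)) = τ / Λ := by
        have hcast : (-((m + 1 : ℕ) : ℤ)) = (-(m:ℤ)) + (-1) := by push_cast; ring
        rw [hcast, zpow_add₀ (ne_of_gt hΛ0), zpow_neg_one, div_eq_mul_inv, hτdef]
      rw [heq] at this
      calc τ / (C * Λ) = (τ / Λ) / C := by ring
        _ ≤ d x y := this
    -- bounds for d'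
    have h3 : d' x y ≤ C' * τ' := (hCb' x y m).1 hm
    have h4 : τ' / (C' * Λ') ≤ d' x y := by
      have := (hCb' x y (m + 1)).2 hm1
      have heq : Λ' ^ (-((m + 1 : ℕ) : ℤ)) = τ' / Λ' := by
        have hcast : (-((m + 1 : ℕ) : ℤ)) = (-(m:ℤ)) + (-1) := by push_cast; ring
        rw [hcast, zpow_add₀ (ne_of_gt hΛ'0), zpow_neg_one, div_eq_mul_inv, hτ'def]
      rw [heq] at this
      calc τ' / (C' * Λ') = (τ' / Λ') / C' := by ring
        _ ≤ d' x y := this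
    constructor
    · -- lower bound : d^α / C₂ ≤ d'
      have ha : d x y ^ α ≤ (C * τ) ^ α := Real.rpow_le_rpow hdpos.le h1 hα.le
      have hb : (C * τ) ^ α = C ^ α * τ ^ α := Real.mul_rpow hC0.le hτ0.le
      have hc2 : d x y ^ α ≤ C ^ α * τ' := by rw [← hττ', ← hb]; exact ha
      calc d x y ^ α / C₂ ≤ (C ^ α * τ') / C₂ := by gcongr
        _ ≤ (C ^ α * τ') / (C ^ α * C' * Λ') := by
            apply div_le_div_of_nonneg_left (by positivity) (by positivity)
            rw [hC₂def]
            nlinarith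
        _ = τ' / (C' * Λ') := by field_simp
        _ ≤ d' x y := h4
    · -- upper bound : d' ≤ C₂ * d^α
      have ha : τ ≤ C * Λ * d x y := by
        rw [div_le_iff₀ (by positivity)] at h2
        linarith [mul_comm (d x y) (C * Λ)]
      have hb : τ ^ α ≤ (C * Λ * d x y) ^ α := Real.rpow_le_rpow hτ0.le ha hα.le
      have hc2 : (C * Λ * d x y) ^ α = (C * Λ) ^ α * d x y ^ α :=
        Real.mul_rpow (by positivity) hdpos.le
      calc d' x y ≤ C' * τ' := h3
        _ = C' * τ ^ α := by rw [hττ']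
        _ ≤ C' * ((C * Λ) ^ α * d x y ^ α) := by rw [← hc2]; gcongr
        _ = C' * (C * Λ) ^ α * d x y ^ α := by ring
        _ ≤ C₂ * d x y ^ α := by
            apply mul_le_mul_of_nonneg_right _ (Real.rpow_nonneg hdpos.le α)
            rw [hC₂def]
            linarith

/-- If `{Xⁿ}` is a visual approximation of width `w` with parameter `Λ > 1` for the
bounded metric `d` on `S` and `d'` is another bounded metric on `S`, then `{Xⁿ}` is a
visual approximation of width `w` for `(S,d')` (for some parameter `Λ' > 1`) if and only
if the identity map `(S,d) → (S,d')` is a snowflake equivalence; moreover, if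
`d' ≍ d^α`, then `{Xⁿ}` is a visual approximation for `(S,d')` with parameter `Λ^α`. -/
theorem stmt10 (S : Type*) (d d' : S → S → ℝ)
    (hd : IsMetricFun d) (hd' : IsMetricFun d')
    (hbd : ∃ M : ℝ, ∀ x y, d x y ≤ M) (hbd' : ∃ M : ℝ, ∀ x y, d' x y ≤ M)
    (X : ℕ → Set (Set S)) (w : ℕ) (Λ : ℝ) (hΛ : 1 < Λ)
    (hvis : IsVisualWith d X w Λ) :
    ((∃ Λ' : ℝ, 1 < Λ' ∧ IsVisualWith d' X w Λ') ↔
      ∃ α C : ℝ, 0 < α ∧ 1 ≤ C ∧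
        ∀ x y : S, d x y ^ α / C ≤ d' x y ∧ d' x y ≤ C * d x y ^ α) ∧
    (∀ α C : ℝ, 0 < α → 1 ≤ C →
      (∀ x y : S, d x y ^ α / C ≤ d' x y ∧ d' x y ≤ C * d x y ^ α) →
      IsVisualWith d' X w (Λ ^ α)) := by
  constructor
  · constructor
    · rintro ⟨Λ', hΛ', hvis'⟩
      exact snowflake_of_visual hd hd' hbd hbd' hΛ hΛ' hvis hvis'
    · rintro ⟨α, C, hα, hC, hcomp⟩
      refine ⟨Λ ^ α, ?_, snowflake_visual hbd hbd' hd hd' hΛ hvis α C hα hC hcomp⟩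
      exact (Real.one_lt_rpow_iff_of_pos (lt_trans zero_lt_one hΛ)).mpr (Or.inl ⟨hΛ, hα⟩)
  · intro α C hα hC hcomp
    exact snowflake_visual hbd hbd' hd hd' hΛ hvis α C hα hC hcomp
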